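/- Assigning items according to a maximum-value matching at buyer-optimal market clearing prices is incentive compatible: if buyer j truthfully reports valuations v(·,j) and receives item i at the buyer-optimal price p_i, while misreporting valuations ṽ(·,j) would yield item ĩ at price p̃_ĩ (buyer-optimal prices for the misreported market), then v(ĩ,j) - p̃_ĩ ≤ v(i,j) - p_i. -/

import Mathlib

open Finset

noncomputable section

/-- Profit of buyer `j` at prices `p`: `max_i (v i j - p i)`. -/
def profit {n : ℕ} (v : Fin n → Fin n → ℝ) (p : Fin n → ℝ) (j : Fin n) : ℝ :=
  ⨆ i, v i j - p i

/-- Value of a perfect matching, where buyer `j` is assigned item `M j`. -/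
def mval {n : ℕ} (v : Fin n → Fin n → ℝ) (M : Fin n ≃ Fin n) : ℝ :=
  ∑ j, v (M j) j

/-- Maximum value of a perfect matching. -/
def vstar {n : ℕ} (v : Fin n → Fin n → ℝ) : ℝ :=
  ⨆ M : Fin n ≃ Fin n, mval v M

/-- `M` witnesses that `p` is market clearing: every buyer gets a profit-maximizing item. -/
def ClearingWitness {n : ℕ} (v : Fin n → Fin n → ℝ) (p : Fin n → ℝ) (M : Fin n ≃ Fin n) : Prop :=
  ∀ j i', v i' j - p i' ≤ v (M j) j - p (M j)

/-- `p` is market clearing: some perfect matching assigns every buyer an item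
maximizing her profit `v i j - p i`. -/
def IsMC {n : ℕ} (v : Fin n → Fin n → ℝ) (p : Fin n → ℝ) : Prop :=
  ∃ M : Fin n ≃ Fin n, ClearingWitness v p M

/-- Buyer-optimal market clearing prices: nonnegative, market clearing, and of
minimum total price among all nonnegative market clearing price vectors. -/
def BuyerOptimal {n : ℕ} (v : Fin n → Fin n → ℝ) (p : Fin n → ℝ) : Prop :=
  (∀ i, 0 ≤ p i) ∧ IsMC v p ∧
    ∀ p' : Fin n → ℝ, (∀ i, 0 ≤ p' i) → IsMC v p' → ∑ i, p i ≤ ∑ i, p' i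

/-- `v*_{-j}`: maximum matching value when buyer `j` is replaced by a dummy
buyer with zero valuations. -/
def vstarDummy {n : ℕ} (v : Fin n → Fin n → ℝ) (j : Fin n) : ℝ :=
  ⨆ M : Fin n ≃ Fin n, ∑ j' ∈ Finset.univ.erase j, v (M j') j'

/-- `v*_{-j}^{-i}`: maximum value of a perfect matching between `I \ {i}` and `J \ {j}`. -/
def vstarRemove {n : ℕ} (v : Fin n → Fin n → ℝ) (i j : Fin n) : ℝ :=
  ⨆ M : {i' : Fin n // i' ≠ i} ≃ {j' : Fin n // j' ≠ j},
    ∑ j' : {j' : Fin n // j' ≠ j}, v (M.symm j') j'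

/-- Buyer `j` is joined, by an `M`-alternating path in the equality graph starting and
ending with a matching edge (`j = j_0, i_0 = M j_0, j_1, i_1 = M j_1, …, i_k = M j_k`),
to an item of price zero. -/
def AltPathZero {n : ℕ} (v : Fin n → Fin n → ℝ) (p : Fin n → ℝ) (M : Fin n ≃ Fin n)
    (j : Fin n) : Prop :=
  ∃ k : ℕ, ∃ js : Fin (k + 1) → Fin n,
    js 0 = j ∧
    (∀ t : Fin k,
      p (M (js t.castSucc)) + profit v p (js t.succ) = v (M (js t.castSucc)) (js t.succ)) ∧
    p (M (js (Fin.last k))) = 0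

/-- A (partial) matching given as a set of item-buyer pairs: pairwise non-incident edges. -/
def IsMatching {n : ℕ} (Mset : Finset (Fin n × Fin n)) : Prop :=
  ∀ e ∈ Mset, ∀ e' ∈ Mset, e ≠ e' → e.1 ≠ e'.1 ∧ e.2 ≠ e'.2

/-- All edges of `Mset` are equality edges w.r.t. the dual solution `(p, q)`. -/
def InEqualityGraph {n : ℕ} (v : Fin n → Fin n → ℝ) (p q : Fin n → ℝ)
    (Mset : Finset (Fin n × Fin n)) : Prop :=
  ∀ e ∈ Mset, p e.1 + q e.2 = v e.1 e.2

/-- Item `i` is reachable from buyer `j` along an `Mset`-alternating path of equality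
edges: `j = j_0, i_0, j_1, i_1, …, i_k = i`, where each `(i_t, j_t)` is a non-matching
equality edge and each `(i_t, j_{t+1})` is a matching edge. -/
def ReachFrom {n : ℕ} (v : Fin n → Fin n → ℝ) (p q : Fin n → ℝ)
    (Mset : Finset (Fin n × Fin n)) (j i : Fin n) : Prop :=
  ∃ k : ℕ, ∃ is js : Fin (k + 1) → Fin n,
    js 0 = j ∧ is (Fin.last k) = i ∧
    (∀ t, p (is t) + q (js t) = v (is t) (js t) ∧ (is t, js t) ∉ Mset) ∧
    (∀ t : Fin k, (is t.castSucc, js t.succ) ∈ Mset)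


section Stmt14Aux
variable {n : ℕ}

/-- Restrict a permutation to the complements of `M j` and `j`. -/
def restrictEquiv (M : Fin n ≃ Fin n) (j : Fin n) :
    {i' : Fin n // i' ≠ M j} ≃ {j' : Fin n // j' ≠ j} where
  toFun i' := ⟨M.symm i'.1, fun h => i'.2 (by simpa using congrArg M h)⟩
  invFun j' := ⟨M j'.1, fun h => j'.2 (M.injective h)⟩
  left_inv i' := by simp
  right_inv j' := by simp

/-- Extend a matching between the complements of `i` and `j` to a full permutation. -/
def extendEquiv (i j : Fin n)
    (N : {i' : Fin n // i' ≠ i} ≃ {j' : Fin n // j' ≠ j}) : Fin n ≃ Fin n :=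
  Equiv.ofBijective
    (fun j'' => if h : j'' = j then i else (N.symm ⟨j'', h⟩).1)
    (Finite.injective_iff_bijective.mp (by
      intro a b hab
      dsimp only at hab
      by_cases ha : a = j
      · by_cases hb : b = j
        · rw [ha, hb]
        · rw [dif_pos ha, dif_neg hb] at hab
          exact absurd hab.symm (N.symm ⟨b, hb⟩).2
      · by_cases hb : b = j
        · rw [dif_neg ha, dif_pos hb] at hab
          exact absurd hab (N.symm ⟨a, ha⟩).2
        · rw [dif_neg ha, dif_neg hb] at hab
          have := N.symm.injective (Subtype.ext hab)
          simpa [Subtype.ext_iff] using this))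

lemma extendEquiv_apply_self (i j : Fin n)
    (N : {i' : Fin n // i' ≠ i} ≃ {j' : Fin n // j' ≠ j}) :
    extendEquiv i j N j = i := by
  simp [extendEquiv, Equiv.ofBijective]

lemma extendEquiv_apply_ne (i j : Fin n)
    (N : {i' : Fin n // i' ≠ i} ≃ {j' : Fin n // j' ≠ j}) (j' : Fin n) (h : j' ≠ j) :
    extendEquiv i j N j' = (N.symm ⟨j', h⟩).1 := by
  simp [extendEquiv, Equiv.ofBijective, h]

lemma sum_erase_eq_subtype (j : Fin n) (g : Fin n → ℝ) :
    ∑ j' ∈ Finset.univ.erase j, g j' = ∑ j' : {j' : Fin n // j' ≠ j}, g j'.1 :=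
  Finset.sum_subtype _ (fun x => by simp) g

lemma vstarDummy_congr (v vt : Fin n → Fin n → ℝ) (j : Fin n)
    (hsame : ∀ i, ∀ j' : Fin n, j' ≠ j → vt i j' = v i j') :
    vstarDummy vt j = vstarDummy v j := by
  unfold vstarDummy
  congr 1; funext M
  exact Finset.sum_congr rfl fun x hx =>
    hsame _ _ (Finset.ne_of_mem_erase hx)

lemma vstarRemove_congr (v vt : Fin n → Fin n → ℝ) (i j : Fin n)
    (hsame : ∀ i, ∀ j' : Fin n, j' ≠ j → vt i j' = v i j') :
    vstarRemove vt i j = vstarRemove v i j := by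
  unfold vstarRemove
  congr 1; funext N
  exact Finset.sum_congr rfl fun x _ => hsame _ _ x.2

/-- For any item `i`: `v i j + vstarRemove v i j ≤ vstar v`. -/
lemma add_vstarRemove_le (v : Fin n → Fin n → ℝ) (i j : Fin n) :
    v i j + vstarRemove v i j ≤ vstar v := by
  have hne : Nonempty ({i' : Fin n // i' ≠ i} ≃ {j' : Fin n // j' ≠ j}) := by
    have h : (Equiv.swap j i) j = i := Equiv.swap_apply_left j i
    exact ⟨h ▸ restrictEquiv (Equiv.swap j i) j⟩
  have : vstarRemove v i j ≤ vstar v - v i j := by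
    refine ciSup_le fun N => ?_
    rw [le_sub_iff_add_le, add_comm]
    have hb : BddAbove (Set.range fun M : Fin n ≃ Fin n => mval v M) :=
      (Set.finite_range _).bddAbove
    have hle : mval v (extendEquiv i j N) ≤ vstar v := le_ciSup hb _
    refine le_trans (le_of_eq ?_) hle
    unfold mval
    rw [← Finset.add_sum_erase _ _ (Finset.mem_univ j), extendEquiv_apply_self,
      sum_erase_eq_subtype]
    congr 1
    refine Finset.sum_congr rfl fun x _ => ?_
    rw [extendEquiv_apply_ne i j N x.1 x.2]
  linarith

/-- For any permutation `M`: `mval v M ≤ v (M j) j + vstarRemove v (M j) j`. -/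
lemma mval_le_add_vstarRemove (v : Fin n → Fin n → ℝ) (M : Fin n ≃ Fin n) (j : Fin n) :
    mval v M ≤ v (M j) j + vstarRemove v (M j) j := by
  unfold mval
  rw [← Finset.add_sum_erase _ _ (Finset.mem_univ j)]
  refine add_le_add le_rfl ?_
  rw [sum_erase_eq_subtype]
  have hb : BddAbove (Set.range fun N : {i' : Fin n // i' ≠ M j} ≃ {j' : Fin n // j' ≠ j} =>
      ∑ j' : {j' : Fin n // j' ≠ j}, v ((N.symm j') : Fin n) j') :=
    (Set.finite_range _).bddAbove
  have hle := le_ciSup hb (restrictEquiv M j)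
  refine le_trans (le_of_eq ?_) hle
  refine Finset.sum_congr rfl fun x _ => ?_
  rfl

end Stmt14Aux

/-- incentive compatibility of the VCG / buyer-optimal mechanism:
misreporting valuations cannot increase buyer `j`'s true profit. -/
theorem stmt_14 (n : ℕ) (v vt : Fin n → Fin n → ℝ)
    (hv : ∀ i j, 0 ≤ v i j) (hvt : ∀ i j, 0 ≤ vt i j)
    (j : Fin n) (hsame : ∀ i, ∀ j' : Fin n, j' ≠ j → vt i j' = v i j')
    (M Mt : Fin n ≃ Fin n) (hM : mval v M = vstar v) (hMt : mval vt Mt = vstar vt) :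
    v (Mt j) j - (vstarDummy vt j - vstarRemove vt (Mt j) j) ≤
      v (M j) j - (vstarDummy v j - vstarRemove v (M j) j) := by
  rw [vstarDummy_congr v vt j hsame, vstarRemove_congr v vt (Mt j) j hsame]
  have h1 : v (Mt j) j + vstarRemove v (Mt j) j ≤ vstar v :=
    add_vstarRemove_le v (Mt j) j
  have h2 : vstar v ≤ v (M j) j + vstarRemove v (M j) j :=
    hM ▸ mval_le_add_vstarRemove v M j
  linarith

end
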